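/- Let R be a ring with (R injective as a left module over itself) and F a finitely generated right R-module. Then the evaluation map Φ_F : F → Hom_R-left(Hom_R(F,R), R), Φ_F(m)(f) = f(m), is surjective. -/
import Mathlib


/-- The evaluation map `Φ_F : F → *(F*)` for a right `R`-module `F` (right modules are
`Rᵐᵒᵖ`-modules): `F* = Hom_R(F,R)` is a left `R`-module and `Φ_F(m)(f) = f(m)`. -/
def Phi {R : Type*} [Ring R] {F : Type*} [AddCommGroup F] [Module Rᵐᵒᵖ F] (m : F) :
    (F →ₗ[Rᵐᵒᵖ] R) →ₗ[R] R where
  toFun f := f m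
  map_add' f g := rfl
  map_smul' r f := rfl

/-- If `R` is left self-injective and `F` is a finitely generated right `R`-module,
then the evaluation map `Φ_F : F → *(F*)` is surjective. -/
theorem stmt10 {R : Type*} [Ring R] (hinj : Module.Injective R R)
    (F : Type*) [AddCommGroup F] [Module Rᵐᵒᵖ F] [Module.Finite Rᵐᵒᵖ F] :
    Function.Surjective (fun m : F => Phi (R := R) m) := by
  intro φ
  obtain ⟨n, m, hm⟩ := Module.Finite.exists_fin (R := Rᵐᵒᵖ) (M := F)
  -- the map `F* → R^n`, `f ↦ (f (m i))_i`, is an injective left `R`-module map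
  let α : (F →ₗ[Rᵐᵒᵖ] R) →ₗ[R] (Fin n → R) :=
    { toFun := fun f i => f (m i)
      map_add' := fun f g => rfl
      map_smul' := fun r f => rfl }
  have hα : Function.Injective α := by
    intro f g hfg
    ext x
    have hx : x ∈ Submodule.span Rᵐᵒᵖ (Set.range m) := hm ▸ Submodule.mem_top
    induction hx using Submodule.span_induction with
    | mem y hy =>
      obtain ⟨i, rfl⟩ := hy
      exact congrFun hfg i
    | zero => simp
    | add y z _ _ hy hz => simp [hy, hz]
    | smul r y _ hy => simp [hy]
  -- extend `φ : F* → R` along `α` using Baer's criterion / injectivity of `R`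
  have hbaer : Module.Baer R R := Module.Baer.of_injective hinj
  obtain ⟨ψ, hψ⟩ := hbaer.extension_property α hα φ
  refine ⟨∑ i, (MulOpposite.op (ψ fun j => if i = j then 1 else 0)) • m i, ?_⟩
  ext f
  have h1 : φ f = ψ (α f) := by rw [← hψ]; rfl
  have h2 : ψ (α f) = ∑ i, (α f i) • ψ fun j => if i = j then 1 else 0 :=
    ψ.pi_apply_eq_sum_univ (α f)
  simp only [Phi, LinearMap.coe_mk, AddHom.coe_mk, map_sum, h1, h2]
  refine Finset.sum_congr rfl fun i _ => ?_
  rw [f.map_smul]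
  rfl
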